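/- For the parameter values c1 = 0.002, c5 = 0.02, c6 = c7 = 0.25, β1 = 1.75, β2 = 0.150217, β3 = 7.142857 and all Hill coefficients equal to 2, the degree-9 steady-state polynomial P has exactly one real root in the interval (0, 1]. -/

import Mathlib

noncomputable def ssf : ℝ → ℝ := fun z =>
  -14.252 * z ^ 9 + 1.752 * z ^ 8 - 0.896805 * z ^ 7
  + 0.110450 * z ^ 6 - 0.000392 * z ^ 5 + 6.73375e-5 * z ^ 4
  - 9.08408e-7 * z ^ 3 + 4.97656e-7 * z ^ 2
  - 1.95312e-10 * z + 1.95312e-10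

noncomputable def ssf' : ℝ → ℝ := fun z =>
  -128.268 * z ^ 8 + 14.016 * z ^ 7 - 6.277635 * z ^ 6
  + 0.6627 * z ^ 5 - 0.00196 * z ^ 4 + 2.6935e-4 * z ^ 3
  - 2.725224e-6 * z ^ 2 + 9.95312e-7 * z - 1.95312e-10

lemma ssf_hasDeriv (z : ℝ) : HasDerivAt ssf (ssf' z) z := by
  have h : HasDerivAt (fun z : ℝ =>
      -14.252 * z ^ 9 + 1.752 * z ^ 8 - 0.896805 * z ^ 7
      + 0.110450 * z ^ 6 - 0.000392 * z ^ 5 + 6.73375e-5 * z ^ 4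
      - 9.08408e-7 * z ^ 3 + 4.97656e-7 * z ^ 2
      - 1.95312e-10 * z + 1.95312e-10)
      (-14.252 * (9 * z ^ 8) + 1.752 * (8 * z ^ 7) - 0.896805 * (7 * z ^ 6)
      + 0.110450 * (6 * z ^ 5) - 0.000392 * (5 * z ^ 4) + 6.73375e-5 * (4 * z ^ 3)
      - 9.08408e-7 * (3 * z ^ 2) + 4.97656e-7 * (2 * z ^ 1)
      - 1.95312e-10 * 1 + 0) z := by
    exact ((((((((((hasDerivAt_pow 9 z).const_mul (-14.252)).add
      ((hasDerivAt_pow 8 z).const_mul 1.752)).sub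
      ((hasDerivAt_pow 7 z).const_mul 0.896805)).add
      ((hasDerivAt_pow 6 z).const_mul 0.110450)).sub
      ((hasDerivAt_pow 5 z).const_mul 0.000392)).add
      ((hasDerivAt_pow 4 z).const_mul 6.73375e-5)).sub
      ((hasDerivAt_pow 3 z).const_mul 9.08408e-7)).add
      ((hasDerivAt_pow 2 z).const_mul 4.97656e-7)).sub
      ((hasDerivAt_id z).const_mul 1.95312e-10)).add (hasDerivAt_const z 1.95312e-10)
  convert h using 1
  · rfl
  unfold ssf'; norm_num; ring

lemma ssf_pos {z : ℝ} (h0 : 0 < z) (h1 : z ≤ 0.12) : 0 < ssf z := by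
  unfold ssf
  nlinarith [sq_nonneg z, pow_pos h0 2, pow_pos h0 4, pow_pos h0 6, pow_pos h0 8,
    mul_nonneg (le_of_lt (pow_pos h0 8)) (sub_nonneg.2 (by nlinarith : 14.252 * z ≤ 1.752)),
    mul_nonneg (le_of_lt (pow_pos h0 6)) (sub_nonneg.2 (by nlinarith : 0.896805 * z ≤ 0.110450)),
    mul_nonneg (le_of_lt (pow_pos h0 4)) (sub_nonneg.2 (by nlinarith : 0.000392 * z ≤ 6.73375e-5)),
    mul_nonneg (le_of_lt (pow_pos h0 2)) (sub_nonneg.2 (by nlinarith : 9.08408e-7 * z ≤ 4.97656e-7))]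

lemma ssf'_neg {z : ℝ} (h0 : 0.12 ≤ z) (h1 : z ≤ 1) : ssf' z < 0 := by
  unfold ssf'
  have hz : (0:ℝ) < z := by linarith
  nlinarith [pow_le_pow_left₀ (by norm_num : (0:ℝ) ≤ 0.12) h0 3,
    pow_le_pow_left₀ (by norm_num : (0:ℝ) ≤ 0.12) h0 5,
    pow_le_pow_left₀ (by norm_num : (0:ℝ) ≤ 0.12) h0 7,
    mul_nonneg (le_of_lt (pow_pos hz 7)) (sub_nonneg.2 h0),
    mul_nonneg (le_of_lt (pow_pos hz 5)) (sub_nonneg.2 h0),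
    mul_nonneg (le_of_lt (pow_pos hz 3)) (sub_nonneg.2 h0),
    pow_pos hz 2, pow_pos hz 3, pow_pos hz 4, pow_pos hz 5, pow_pos hz 7,
    mul_le_mul_of_nonneg_left (pow_le_pow_left₀ hz.le h1 4) (le_of_lt (pow_pos hz 3))]

lemma ssf_anti : StrictAntiOn ssf (Set.Icc 0.12 1) := by
  apply strictAntiOn_of_deriv_neg (convex_Icc _ _)
  · exact (Continuous.continuousOn (by unfold ssf; continuity))
  · intro x hx
    rw [interior_Icc] at hx
    rw [(ssf_hasDeriv x).deriv]
    exact ssf'_neg hx.1.le hx.2.le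

/-- For the parameter values of Table 1 (all Hill coefficients equal to 2),
the degree-9 steady-state polynomial has exactly one real root in `(0, 1]`. -/
theorem steady_state_polynomial_unique_root
    (P : ℝ → ℝ)
    (hP : ∀ z : ℝ, P z =
      -14.252 * z ^ 9 + 1.752 * z ^ 8 - 0.896805 * z ^ 7
      + 0.110450 * z ^ 6 - 0.000392 * z ^ 5 + 6.73375e-5 * z ^ 4
      - 9.08408e-7 * z ^ 3 + 4.97656e-7 * z ^ 2
      - 1.95312e-10 * z + 1.95312e-10) :
    ∃! z : ℝ, (0 < z ∧ z ≤ 1) ∧ P z = 0 := by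
  have hPf : P = ssf := funext fun z => hP z
  subst hPf
  have ha : ssf 0.12 > 0 := by unfold ssf; norm_num
  have hb : ssf 1 < 0 := by unfold ssf; norm_num
  have hcont : ContinuousOn ssf (Set.Icc 0.12 1) :=
    Continuous.continuousOn (by unfold ssf; continuity)
  have hiv := intermediate_value_Icc' (by norm_num : (0.12:ℝ) ≤ 1) hcont
  have h0mem : (0:ℝ) ∈ Set.Icc (ssf 1) (ssf 0.12) := ⟨hb.le, ha.le⟩
  obtain ⟨z, hz, hz0⟩ := hiv h0mem
  refine ⟨z, ⟨⟨by linarith [hz.1], hz.2⟩, hz0⟩, ?_⟩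
  rintro y ⟨⟨hy0, hy1⟩, hy⟩
  have hy12 : 0.12 ≤ y := by
    by_contra h
    push_neg at h
    exact absurd hy (ne_of_gt (ssf_pos hy0 h.le))
  exact ssf_anti.injOn ⟨hy12, hy1⟩ hz (by rw [hy, hz0])
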